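/- For every complex number w and every unimodular complex number c, |w - c| ≤ √2 · |1 + |w - 1| - c|. -/

import Mathlib

theorem stmt_2 (w c : ℂ) (hc : ‖c‖ = 1) :
    ‖w - c‖ ≤ Real.sqrt 2 * ‖((1 + ‖w - 1‖ : ℝ) : ℂ) - c‖ := by
  set r := ‖w - 1‖ with hr
  set t := ‖(1 : ℂ) - c‖ with ht
  have hr0 : 0 ≤ r := norm_nonneg _
  have ht0 : 0 ≤ t := norm_nonneg _
  have h1 : ‖w - c‖ ≤ r + t := by
    have : w - c = (w - 1) + (1 - c) := by ring
    rw [this]; exact norm_add_le _ _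
  have hc2 : c.re ^ 2 + c.im ^ 2 = 1 := by
    have h := hc
    have := Complex.sq_norm c
    rw [h, Complex.normSq_apply] at this
    nlinarith [this]
  have ht2 : t ^ 2 = 2 - 2 * c.re := by
    have := Complex.sq_norm ((1 : ℂ) - c)
    rw [Complex.normSq_apply] at this
    simp [Complex.sub_re, Complex.sub_im] at this
    rw [ht, this]
    nlinarith [hc2]
  set N := ‖((1 + r : ℝ) : ℂ) - c‖ with hN
  have hN0 : 0 ≤ N := norm_nonneg _
  have hN2 : N ^ 2 = r ^ 2 + (1 + r) * t ^ 2 := by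
    have := Complex.sq_norm (((1 + r : ℝ) : ℂ) - c)
    rw [Complex.normSq_apply] at this
    simp [Complex.sub_re, Complex.sub_im] at this
    rw [hN]; push_cast; rw [this, ht2]
    nlinarith [hc2]
  have key : (r + t) ^ 2 ≤ 2 * N ^ 2 := by
    rw [hN2]; nlinarith [sq_nonneg (r - t), mul_nonneg hr0 (sq_nonneg t)]
  have hsqrt : Real.sqrt 2 * N = Real.sqrt (2 * N ^ 2) := by
    rw [Real.sqrt_mul (by norm_num), Real.sqrt_sq hN0]
  calc ‖w - c‖ ≤ r + t := h1
    _ = Real.sqrt ((r + t) ^ 2) := (Real.sqrt_sq (by linarith)).symm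
    _ ≤ Real.sqrt (2 * N ^ 2) := Real.sqrt_le_sqrt key
    _ = Real.sqrt 2 * N := hsqrt.symm
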